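/- (Theorem 2, individual certification, for kNN) Let X be a metric space, c ≥ 2, k a natural number, ρ : X × Fin c → ℕ injective, D a multiset over X × Fin c, and let (x_1,y_1),…,(x_t,y_t) be a testing dataset with x_i : X and y_i ∈ Fin c. For each i, let a_i := kNN_k(D,x_i), s_l^{(i)} := s_l(N_k(D,x_i)), let b_i be the largest label among those l ≠ a_i attaining the maximum of s_l^{(i)} over l ≠ a_i, and set e_i* := ⌈(s_{a_i}^{(i)} − s_{b_i}^{(i)} + 𝟙(b_i < a_i))/2⌉ − 1 ∈ ℤ. Then for every natural number e and every multiset D* over X × Fin c with S(D,D*) ≤ e, the number of indices i with kNN_k(D*,x_i) = y_i is at least the number of indices i with a_i = y_i and (e : ℤ) ≤ e_i*. -/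

import Mathlib

/-- Poisoning size between two multisets: `max (card A) (card B) - card (A ∩ B)`. -/
noncomputable def pSize {α : Type*} (A B : Multiset α) : ℕ :=
  haveI := Classical.decEq α
  max A.card B.card - (A ∩ B).card

/-- Number of votes for label `l` in a multiset of labeled examples (counted with
multiplicity). -/
def votes {X : Type*} {c : ℕ} (T : Multiset (X × Fin c)) (l : Fin c) : ℕ :=
  T.countP (fun p => p.2 = l)

/-- Tie-broken majority label: the largest label (in the order of `Fin c`) among the
labels attaining the maximum vote count. -/
noncomputable def majLabel {X : Type*} {c : ℕ} (hc : 0 < c) (T : Multiset (X × Fin c)) :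
    Fin c :=
  (Finset.univ.filter (fun l : Fin c => ∀ l', votes T l' ≤ votes T l)).max'
    (by
      haveI : NeZero c := ⟨hc.ne'⟩
      obtain ⟨b, -, hb⟩ := Finset.exists_max_image (Finset.univ : Finset (Fin c)) (votes T)
        Finset.univ_nonempty
      exact ⟨b, Finset.mem_filter.mpr ⟨Finset.mem_univ b, fun l' => hb l' (Finset.mem_univ l')⟩⟩)

/-- The largest label, among those `l ≠ a`, attaining the maximum of `s l` over `l ≠ a`. -/
noncomputable def secondLabel {c : ℕ} (hc : 2 ≤ c) (s : Fin c → ℕ) (a : Fin c) : Fin c :=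
  (Finset.univ.filter (fun l : Fin c => l ≠ a ∧ ∀ l', l' ≠ a → s l' ≤ s l)).max'
    (by
      have h1 : 1 < Fintype.card (Fin c) := by rw [Fintype.card_fin]; omega
      obtain ⟨l0, hl0⟩ := Fintype.exists_ne_of_one_lt_card h1 a
      have hne : (Finset.univ.filter (fun l : Fin c => l ≠ a)).Nonempty :=
        ⟨l0, Finset.mem_filter.mpr ⟨Finset.mem_univ _, hl0⟩⟩
      obtain ⟨b, hb, hbmax⟩ := Finset.exists_max_image _ s hne
      refine ⟨b, Finset.mem_filter.mpr ⟨Finset.mem_univ _, (Finset.mem_filter.mp hb).2, ?_⟩⟩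
      intro l' hl'
      exact hbmax l' (Finset.mem_filter.mpr ⟨Finset.mem_univ _, hl'⟩))

/-- The kNN ordering w.r.t. a test input `x`, with ties broken by the ranking `ρ`
(larger ranks first): `p` precedes `q` iff `dist p.1 x < dist q.1 x`, or
`dist p.1 x = dist q.1 x` and `ρ p ≥ ρ q`. -/
def knnLE {X : Type*} [MetricSpace X] {c : ℕ} (ρ : X × Fin c → ℕ) (x : X)
    (p q : X × Fin c) : Prop :=
  dist p.1 x < dist q.1 x ∨ (dist p.1 x = dist q.1 x ∧ ρ q ≤ ρ p)

/-- kNN neighbor multiset: the first `min k (card D)` elements of `D` in the order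
`knnLE ρ x` (sort `D` by this order and take the first `k`). -/
noncomputable def Nk {X : Type*} [MetricSpace X] {c : ℕ} {ρ : X × Fin c → ℕ}
    (hρ : Function.Injective ρ) (k : ℕ) (D : Multiset (X × Fin c)) (x : X) :
    Multiset (X × Fin c) :=
  haveI : DecidableRel (knnLE ρ x) := Classical.decRel _
  haveI : IsTrans _ (knnLE ρ x) := ⟨by
    rintro p q s (h1 | ⟨h1, h1'⟩) (h2 | ⟨h2, h2'⟩)
    · exact Or.inl (h1.trans h2)
    · exact Or.inl (h1.trans_eq h2)
    · exact Or.inl (h1.trans_lt h2)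
    · exact Or.inr ⟨h1.trans h2, h2'.trans h1'⟩⟩
  haveI : IsAntisymm _ (knnLE ρ x) := ⟨by
    rintro p q (h1 | ⟨h1, h1'⟩) (h2 | ⟨h2, h2'⟩)
    · exact absurd h2 (lt_asymm h1)
    · exact absurd h2.symm h1.ne
    · exact absurd h1.symm h2.ne
    · exact hρ (le_antisymm h2' h1')⟩
  haveI : IsTotal _ (knnLE ρ x) := ⟨by
    intro p q
    rcases lt_trichotomy (dist p.1 x) (dist q.1 x) with h | h | h
    · exact Or.inl (Or.inl h)
    · rcases le_total (ρ q) (ρ p) with h' | h'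
      · exact Or.inl (Or.inr ⟨h, h'⟩)
      · exact Or.inr (Or.inr ⟨h.symm, h'⟩)
    · exact Or.inr (Or.inl h)⟩
  (↑((D.sort (knnLE ρ x)).take k) : Multiset (X × Fin c))

/-- kNN prediction: tie-broken majority label among the kNN neighbors. -/
noncomputable def kNNpred {X : Type*} [MetricSpace X] {c : ℕ} (hc : 0 < c)
    {ρ : X × Fin c → ℕ} (hρ : Function.Injective ρ) (k : ℕ)
    (D : Multiset (X × Fin c)) (x : X) : Fin c :=
  majLabel hc (Nk hρ k D x)

lemma take_sublist_take' {α : Type*} {l₁ l₂ : List α} (h : l₁.Sublist l₂) :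
    ∀ m j, m + l₂.length ≤ j + l₁.length → (l₁.take m).Sublist (l₂.take j) := by
  induction h with
  | slnil => intro m j _; simp
  | @cons l₁ l₂ a h ih =>
    intro m j hmj
    have hl := h.length_le
    match j with
    | 0 => exfalso; simp at hmj; omega
    | j+1 =>
      have h2 := ih m j (by simp at hmj; omega)
      rw [List.take_succ_cons]
      exact h2.cons a
  | @cons_cons l₁ l₂ a h ih =>
    intro m j hmj
    have hl := h.length_le
    match m with
    | 0 => simp
    | m+1 =>
      match j with
      | 0 => exfalso; simp at hmj; omega
      | j+1 =>
        rw [List.take_succ_cons, List.take_succ_cons]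
        exact (ih m j (by simp at hmj; omega)).cons₂ a

lemma sortTake_le_sortTake {α : Type*} (r : α → α → Prop) [DecidableRel r]
    [IsTrans α r] [IsAntisymm α r] [IsTotal α r] {I A : Multiset α} (h : I ≤ A)
    {m k : ℕ} (hmk : m + (Multiset.card A - Multiset.card I) ≤ k) :
    (↑((I.sort r).take m) : Multiset α) ≤ ↑((A.sort r).take k) := by
  have hsub : (I.sort r).Sublist (A.sort r) := by
    apply List.sublist_of_subperm_of_pairwise ?_ (I.pairwise_sort r) (A.pairwise_sort r)
    rw [← Multiset.coe_le, Multiset.sort_eq, Multiset.sort_eq]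
    exact h
  have hcard : Multiset.card I ≤ Multiset.card A := Multiset.card_le_card h
  have h2 := take_sublist_take' hsub m k
    (by rw [Multiset.length_sort, Multiset.length_sort]; omega)
  exact Multiset.coe_le.mpr h2.subperm

lemma card_sub_le_pSize {α : Type*} [inst : DecidableEq α] (A B : Multiset α) :
    Multiset.card A - Multiset.card (A ∩ B) ≤ pSize A B := by
  unfold pSize
  rw [Subsingleton.elim (Classical.decEq α) inst]
  omega

lemma pSize_comm {α : Type*} (A B : Multiset α) : pSize A B = pSize B A := by
  unfold pSize
  rw [@Multiset.inter_comm _ (Classical.decEq α), max_comm]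

lemma card_sub_le_pSize' {α : Type*} [inst : DecidableEq α] (A B : Multiset α) :
    Multiset.card B - Multiset.card (A ∩ B) ≤ pSize A B := by
  unfold pSize
  rw [Subsingleton.elim (Classical.decEq α) inst]
  have := Multiset.card_le_card (Multiset.inter_le_right (s := A) (t := B))
  omega
section NkLemmas
variable {X : Type*} [MetricSpace X] {c : ℕ} {ρ : X × Fin c → ℕ}

lemma card_sortTake {α : Type*} (r : α → α → Prop) [DecidableRel r]
    [IsTrans α r] [IsAntisymm α r] [IsTotal α r] (s : Multiset α) (k : ℕ) :
    Multiset.card (↑((s.sort r).take k) : Multiset α) = min k (Multiset.card s) := by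
  rw [Multiset.coe_card, List.length_take, Multiset.length_sort]

lemma knn_instances (hρ : Function.Injective ρ) (x : X) :
    IsTrans _ (knnLE ρ x) ∧ IsAntisymm _ (knnLE ρ x) ∧ IsTotal _ (knnLE ρ x) := by
  refine ⟨⟨?_⟩, ⟨?_⟩, ⟨?_⟩⟩
  · rintro p q s (h1 | ⟨h1, h1'⟩) (h2 | ⟨h2, h2'⟩)
    · exact Or.inl (h1.trans h2)
    · exact Or.inl (h1.trans_eq h2)
    · exact Or.inl (h1.trans_lt h2)
    · exact Or.inr ⟨h1.trans h2, h2'.trans h1'⟩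
  · rintro p q (h1 | ⟨h1, h1'⟩) (h2 | ⟨h2, h2'⟩)
    · exact absurd h2 (lt_asymm h1)
    · exact absurd h2.symm h1.ne
    · exact absurd h1.symm h2.ne
    · exact hρ (le_antisymm h2' h1')
  · intro p q
    rcases lt_trichotomy (dist p.1 x) (dist q.1 x) with h | h | h
    · exact Or.inl (Or.inl h)
    · rcases le_total (ρ q) (ρ p) with h' | h'
      · exact Or.inl (Or.inr ⟨h, h'⟩)
      · exact Or.inr (Or.inr ⟨h.symm, h'⟩)
    · exact Or.inr (Or.inl h)

lemma card_Nk (hρ : Function.Injective ρ) (k : ℕ) (D : Multiset (X × Fin c)) (x : X) :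
    Multiset.card (Nk hρ k D x) = min k (Multiset.card D) := by
  unfold Nk
  letI : DecidableRel (knnLE ρ x) := Classical.decRel _
  obtain ⟨i1, i2, i3⟩ := knn_instances hρ x
  exact card_sortTake _ _ _

lemma Nk_le (hρ : Function.Injective ρ) {I D : Multiset (X × Fin c)} (h : I ≤ D) {m k : ℕ}
    (hmk : m + (Multiset.card D - Multiset.card I) ≤ k) (x : X) :
    Nk hρ m I x ≤ Nk hρ k D x := by
  unfold Nk
  letI : DecidableRel (knnLE ρ x) := Classical.decRel _
  obtain ⟨i1, i2, i3⟩ := knn_instances hρ x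
  exact sortTake_le_sortTake _ h hmk

end NkLemmas
lemma card_le_inter_Nk {X : Type*} [MetricSpace X] {c : ℕ} [DecidableEq (X × Fin c)]
    {ρ : X × Fin c → ℕ}
    (hρ : Function.Injective ρ) (k : ℕ) {D D' : Multiset (X × Fin c)} (x : X) {e : ℕ}
    (hS : pSize D D' ≤ e) :
    Multiset.card (Nk hρ k D x) ≤ Multiset.card (Nk hρ k D x ∩ Nk hρ k D' x) + e := by
  have hID : D ∩ D' ≤ D := Multiset.inter_le_left (s := D) (t := D')
  have hID' : D ∩ D' ≤ D' := Multiset.inter_le_right (s := D) (t := D')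
  have h1 : Multiset.card D - Multiset.card (D ∩ D') ≤ e :=
    le_trans (card_sub_le_pSize D D') hS
  have h2 : Multiset.card D' - Multiset.card (D ∩ D') ≤ e :=
    le_trans (card_sub_le_pSize' D D') hS
  have hcI : Multiset.card (D ∩ D') ≤ Multiset.card D := Multiset.card_le_card hID
  have hcI' : Multiset.card (D ∩ D') ≤ Multiset.card D' := Multiset.card_le_card hID'
  rw [card_Nk]
  by_cases hke : min k (Multiset.card D) ≤ e
  · omega
  · set m := min k (Multiset.card D) - e with hm
    have hm1 : Nk hρ m (D ∩ D') x ≤ Nk hρ k D x := Nk_le hρ hID (by omega) x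
    have hm2 : Nk hρ m (D ∩ D') x ≤ Nk hρ k D' x := Nk_le hρ hID' (by omega) x
    have hle : Nk hρ m (D ∩ D') x ≤ Nk hρ k D x ∩ Nk hρ k D' x :=
      Multiset.le_inter hm1 hm2
    have := Multiset.card_le_card hle
    rw [card_Nk] at this
    omega

lemma votes_le_add {X : Type*} {c : ℕ} {T₁ T₂ : Multiset (X × Fin c)} (h : T₁ ≤ T₂)
    (l : Fin c) :
    votes T₂ l ≤ votes T₁ l + (Multiset.card T₂ - Multiset.card T₁) := by
  obtain ⟨R, rfl⟩ := Multiset.le_iff_exists_add.mp h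
  unfold votes
  rw [Multiset.countP_add, Multiset.card_add]
  have h1 := Multiset.countP_le_card (fun p : X × Fin c => p.2 = l) R
  omega

lemma votes_mono {X : Type*} {c : ℕ} {T₁ T₂ : Multiset (X × Fin c)} (h : T₁ ≤ T₂)
    (l : Fin c) : votes T₁ l ≤ votes T₂ l :=
  Multiset.countP_le_of_le _ h
lemma secondLabel_spec {c : ℕ} (hc : 2 ≤ c) (s : Fin c → ℕ) (a : Fin c) :
    secondLabel hc s a ≠ a ∧ ∀ l', l' ≠ a → s l' ≤ s (secondLabel hc s a) := by
  unfold secondLabel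
  exact (Finset.mem_filter.mp (Finset.max'_mem
    (Finset.univ.filter (fun l : Fin c => l ≠ a ∧ ∀ l', l' ≠ a → s l' ≤ s l)) _)).2

lemma le_secondLabel {c : ℕ} (hc : 2 ≤ c) (s : Fin c → ℕ) (a : Fin c) {l : Fin c}
    (h1 : l ≠ a) (h2 : ∀ l', l' ≠ a → s l' ≤ s l) : l ≤ secondLabel hc s a := by
  unfold secondLabel
  exact Finset.le_max' _ _ (Finset.mem_filter.mpr ⟨Finset.mem_univ _, h1, h2⟩)

lemma majLabel_eq {X : Type*} {c : ℕ} (hc : 0 < c) (T : Multiset (X × Fin c)) {a : Fin c}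
    (h1 : ∀ l, votes T l ≤ votes T a) (h2 : ∀ l, a < l → votes T l < votes T a) :
    majLabel hc T = a := by
  unfold majLabel
  apply le_antisymm
  · apply Finset.max'_le
    intro y hy
    rw [Finset.mem_filter] at hy
    by_contra hlt
    have hay : a < y := lt_of_not_ge hlt
    have := h2 y hay
    have := hy.2 a
    omega
  · exact Finset.le_max' _ _ (Finset.mem_filter.mpr ⟨Finset.mem_univ _, h1⟩)

/-- Theorem 2, individual certification, for kNN: for any poisoned dataset
with poisoning size at most `e`, the number of correctly classified testing examples is at
least the number of indices `i` with `a_i = y_i` and `e ≤ e_i*`. -/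
theorem knn_individual_certification {X : Type*} [MetricSpace X] {c : ℕ} (hc : 2 ≤ c)
    (k : ℕ) {ρ : X × Fin c → ℕ} (hρ : Function.Injective ρ)
    (D : Multiset (X × Fin c)) {t : ℕ} (xs : Fin t → X) (ys : Fin t → Fin c)
    (a b : Fin t → Fin c) (estar : Fin t → ℤ)
    (ha : ∀ i, a i = kNNpred (by omega : 0 < c) hρ k D (xs i))
    (hb : ∀ i, b i = secondLabel hc (fun l => votes (Nk hρ k D (xs i)) l) (a i))
    (he : ∀ i, estar i =
      ⌈(((votes (Nk hρ k D (xs i)) (a i) : ℤ) - (votes (Nk hρ k D (xs i)) (b i) : ℤ) +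
          if b i < a i then 1 else 0 : ℤ) : ℚ) / 2⌉ - 1)
    (e : ℕ) (Dstar : Multiset (X × Fin c)) (hD : pSize D Dstar ≤ e) :
    (Finset.univ.filter (fun i => a i = ys i ∧ (e : ℤ) ≤ estar i)).card ≤
      (Finset.univ.filter
        (fun i => kNNpred (by omega : 0 < c) hρ k Dstar (xs i) = ys i)).card := by
  classical
  have key : ∀ i : Fin t, a i = ys i → (e : ℤ) ≤ estar i →
      kNNpred (by omega : 0 < c) hρ k Dstar (xs i) = ys i := by
    intro i hy hE
    set x := xs i with hx
    set T := Nk hρ k D x with hT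
    set T' := Nk hρ k Dstar x with hT'
    -- card bounds
    have hc1 : Multiset.card T ≤ Multiset.card (T ∩ T') + e := card_le_inter_Nk hρ k x hD
    have hc2 : Multiset.card T' ≤ Multiset.card (T ∩ T') + e := by
      have hS' : pSize Dstar D ≤ e := by rw [pSize_comm]; exact hD
      have h3 := card_le_inter_Nk hρ k x hS'
      rwa [Multiset.inter_comm] at h3
    have hJT : T ∩ T' ≤ T := Multiset.inter_le_left
    have hJT' : T ∩ T' ≤ T' := Multiset.inter_le_right
    have hcJT : Multiset.card (T ∩ T') ≤ Multiset.card T := Multiset.card_le_card hJT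
    have hcJT' : Multiset.card (T ∩ T') ≤ Multiset.card T' := Multiset.card_le_card hJT'
    -- votes transfer
    have key2 : ∀ l, votes T l ≤ votes T' l + e ∧ votes T' l ≤ votes T l + e := by
      intro l
      have h1 := votes_le_add hJT l
      have h2 := votes_le_add hJT' l
      have h3 := votes_mono hJT l
      have h4 := votes_mono hJT' l
      omega
    -- properties of b
    have hbT : b i = secondLabel hc (fun l => votes T l) (a i) := hb i
    have hbspec := secondLabel_spec hc (fun l => votes T l) (a i)
    rw [← hbT] at hbspec
    obtain ⟨hbne, hbmax⟩ := hbspec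
    have hbtop : ∀ l, l ≠ a i → (∀ l', l' ≠ a i → votes T l' ≤ votes T l) →
        l ≤ b i := by
      intro l h1 h2
      rw [hbT]
      exact le_secondLabel hc (fun l => votes T l) (a i) h1 h2
    -- gap from estar
    have hgapZ : 2*(e:ℤ) < (votes T (a i) : ℤ) - (votes T (b i) : ℤ) +
        (if b i < a i then 1 else 0) := by
      have hei := he i
      rw [← hx, ← hT] at hei
      set M : ℤ := (votes T (a i) : ℤ) - (votes T (b i) : ℤ) +
        (if b i < a i then 1 else 0) with hM
      have h1 : (e : ℤ) < ⌈((M : ℚ))/2⌉ := by omega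
      have h2 : ((e : ℤ) : ℚ) < (M : ℚ)/2 := Int.lt_ceil.mp h1
      have h3 : ((2*(e:ℤ) : ℤ) : ℚ) < ((M : ℤ) : ℚ) := by push_cast at h2 ⊢; linarith
      exact_mod_cast h3
    -- strict second place when needed
    have hstrict : ∀ l, a i < l → b i < a i → votes T l + 1 ≤ votes T (b i) := by
      intro l hal hba
      have hne : l ≠ a i := ne_of_gt hal
      have h1 : votes T l ≤ votes T (b i) := hbmax l hne
      rcases lt_or_eq_of_le h1 with h | h
      · omega
      · exfalso
        have hlb : l ≤ b i := hbtop l hne (fun l' hl' => (hbmax l' hl').trans h.ge)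
        exact absurd hlb (not_le.mpr (hba.trans hal))
    -- main per-label comparison
    have main : ∀ l, votes T' l ≤ votes T' (a i) ∧
        (a i < l → votes T' l < votes T' (a i)) := by
      intro l
      by_cases hla : l = a i
      · subst hla; exact ⟨le_refl _, fun h => absurd h (lt_irrefl _)⟩
      · have hbl : votes T l ≤ votes T (b i) := hbmax l hla
        have k2a := key2 (a i)
        have k2l := key2 l
        by_cases hba : b i < a i
        · rw [if_pos hba] at hgapZ
          constructor
          · omega
          · intro hal
            have := hstrict l hal hba
            omega
        · rw [if_neg hba] at hgapZ
          constructor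
          · omega
          · intro _; omega
    -- conclude
    rw [← hy]
    unfold kNNpred
    rw [← hT']
    exact majLabel_eq _ T' (fun l => (main l).1) (fun l h => (main l).2 h)
  apply Finset.card_le_card
  intro i hi
  rw [Finset.mem_filter] at hi ⊢
  exact ⟨Finset.mem_univ _, key i hi.2.1 hi.2.2⟩
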